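/- The Fagnano orbit (medial triangle) is the shortest closed billiard trajectory in an equilateral triangle of side length s, and its length equals 3s/2. -/

import Mathlib

open Real EuclideanGeometry

open scoped RealInnerProductSpace

section FagnanoAux

variable {V : Type*} [NormedAddCommGroup V] [InnerProductSpace ℝ V]


variable {V : Type*} [NormedAddCommGroup V] [InnerProductSpace ℝ V]

/-- In an equilateral triangle `X Y Z`, the vectors `X - Y` and `Z - Y` are
linearly independent. -/
lemma fag_indep (X Y Z : V) (s : ℝ) (hs : 0 < s) (hXY : dist X Y = s)
    (hYZ : dist Y Z = s) (hZX : dist Z X = s) :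
    ∀ x y : ℝ, x • (X - Y) = y • (Z - Y) → x = 0 ∧ y = 0 := by
  have hXYn : ‖X - Y‖ = s := by rw [← dist_eq_norm, hXY]
  have hZYn : ‖Z - Y‖ = s := by rw [← dist_eq_norm, dist_comm, hYZ]
  intro x y h
  by_cases hy : y = 0
  · subst hy
    simp only [zero_smul] at h
    rcases smul_eq_zero.1 h with h | h
    · exact ⟨h, rfl⟩
    · exfalso
      rw [sub_eq_zero] at h
      rw [h, dist_self] at hXY; linarith
  · exfalso
    have hxn : |x| * s = |y| * s := by
      have := congrArg norm h
      rwa [norm_smul, norm_smul, Real.norm_eq_abs, Real.norm_eq_abs, hXYn, hZYn] at this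
    have hxy : |x| = |y| := by
      exact mul_right_cancel₀ hs.ne' hxn
    have hx : x ≠ 0 := by
      intro hx0; apply hy; rw [hx0] at hxy; simpa using hxy.symm
    have hZY : Z - Y = (x / y) • (X - Y) := by
      have := congrArg (fun v => (y⁻¹ : ℝ) • v) h
      simp only [smul_smul, inv_mul_cancel₀ hy, one_smul] at this
      rw [← this]
      congr 1
      field_simp
    have habs : |x / y| = 1 := by rw [abs_div, hxy, div_self (abs_ne_zero.2 hy)]
    rcases abs_eq (by norm_num : (0:ℝ) ≤ 1) |>.1 habs with h1 | h1
    · rw [h1, one_smul, sub_left_inj] at hZY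
      rw [← hZY, dist_self] at hZX; linarith
    · rw [h1, neg_one_smul, neg_sub] at hZY
      have : Z - X = (2:ℝ) • (Y - X) := by
        have : Z - X = (Z - Y) + (Y - X) := by abel
        rw [this, hZY]; module
      have h2 : dist Z X = 2 * s := by
        rw [dist_eq_norm, this, norm_smul, Real.norm_eq_abs]
        rw [← dist_eq_norm, dist_comm, hXY]
        norm_num
      rw [hZX] at h2; linarith

/-- Two sides of a (equilateral) triangle intersect only at the common vertex. -/
lemma fag_seg_cap (X Y Z : V) (s : ℝ) (hs : 0 < s) (hXY : dist X Y = s)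
    (hYZ : dist Y Z = s) (hZX : dist Z X = s) :
    ∀ w : V, w ∈ segment ℝ X Y → w ∈ segment ℝ Y Z → w = Y := by
  intro w hw1 hw2
  rcases hw1 with ⟨a, b, ha, hb, hab, hw1⟩
  rcases hw2 with ⟨c, d, hc, hd, hcd, hw2⟩
  have h1 : w - Y = a • (X - Y) := by
    rw [← hw1]; rw [smul_sub]
    have : b = 1 - a := by linarith
    rw [this]; module
  have h2 : w - Y = d • (Z - Y) := by
    rw [← hw2]; rw [smul_sub]
    have : c = 1 - d := by linarith
    rw [this]; module
  have := fag_indep X Y Z s hs hXY hYZ hZX a d (by rw [← h1, h2])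
  have ha0 : a = 0 := this.1
  rw [ha0, zero_smul, sub_eq_zero] at h1
  exact h1

/-- The base angle identity used for the Fagnano orbit: in an equilateral triangle the
angle `(Z-Y, X-Y)` equals the angle `(Z-X, Y-X)`. -/
lemma fag_eqang (X Y Z : V) (s : ℝ) (hs : 0 < s) (hXY : dist X Y = s)
    (hYZ : dist Y Z = s) (hZX : dist Z X = s) :
    InnerProductGeometry.angle (Z - Y) (X - Y) = InnerProductGeometry.angle (Z - X) (Y - X) := by
  have hZYn : ‖Z - Y‖ = s := by rw [← dist_eq_norm, dist_comm, hYZ]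
  have hXYn : ‖X - Y‖ = s := by rw [← dist_eq_norm, hXY]
  have hZXn : ‖Z - X‖ = s := by rw [← dist_eq_norm, hZX]
  have hYXn : ‖Y - X‖ = s := by rw [← dist_eq_norm, dist_comm, hXY]
  unfold InnerProductGeometry.angle
  congr 1
  rw [real_inner_eq_norm_mul_self_add_norm_mul_self_sub_norm_sub_mul_self_div_two,
      real_inner_eq_norm_mul_self_add_norm_mul_self_sub_norm_sub_mul_self_div_two]
  have e1 : Z - Y - (X - Y) = Z - X := by abel
  have e2 : Z - X - (Y - X) = Z - Y := by abel
  rw [e1, e2, hZYn, hXYn, hZXn, hYXn]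

/-- **Fagnano's inequality**: the perimeter of a triangle inscribed in an equilateral
triangle of side `s` is at least `3s/2`. -/
lemma fag_ineq (A B C P Q R : V) (s : ℝ) (hs : 0 < s)
    (hAB : dist A B = s) (hBC : dist B C = s) (hCA : dist C A = s)
    (hP : P ∈ segment ℝ A B) (hQ : Q ∈ segment ℝ B C) (hR : R ∈ segment ℝ C A) :
    3 * s / 2 ≤ dist P Q + dist Q R + dist R P := by
  set x := B - A with hx
  set y := C - B with hy
  -- parameters on the lines
  obtain ⟨a1, b1, _, _, hab1, hP1⟩ := hP
  obtain ⟨a2, b2, _, _, hab2, hQ1⟩ := hQ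
  obtain ⟨a3, b3, _, _, hab3, hR1⟩ := hR
  set t := b1; set u := b2; set v := b3
  have hPA : P = A + t • x := by
    rw [← hP1, hx]; have : a1 = 1 - t := by linarith
    rw [this]; module
  have hQB : Q = B + u • y := by
    rw [← hQ1, hy]; have : a2 = 1 - u := by linarith
    rw [this]; module
  have hRC : R = C + v • (-(x + y)) := by
    rw [← hR1, hx, hy]; have : a3 = 1 - v := by linarith
    rw [this]; module
  -- inner product data
  have hxn : ‖x‖ = s := by rw [hx, ← dist_eq_norm, dist_comm, hAB]
  have hyn : ‖y‖ = s := by rw [hy, ← dist_eq_norm, dist_comm, hBC]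
  have hxyn : ‖x + y‖ = s := by
    have : x + y = C - A := by rw [hx, hy]; abel
    rw [this, ← dist_eq_norm, hCA]
  have hpp : (inner ℝ x x : ℝ) = s ^ 2 := by
    rw [real_inner_self_eq_norm_sq, hxn]
  have hqq : (inner ℝ y y : ℝ) = s ^ 2 := by
    rw [real_inner_self_eq_norm_sq, hyn]
  have hr1 : (inner ℝ x y : ℝ) = -(s ^ 2 / 2) := by
    have := norm_add_sq_real x y
    rw [hxn, hyn, hxyn] at this; linarith
  have hr2 : (inner ℝ y x : ℝ) = -(s ^ 2 / 2) := by rw [real_inner_comm]; exact hr1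
  -- the three linear lower bounds
  have key : ∀ w z : V, (inner ℝ w z : ℝ) ≤ ‖w‖ * ‖z‖ := fun w z => real_inner_le_norm w z
  have hd1 : (inner ℝ (x + y) (Q - P) : ℝ) ≤ s * dist P Q := by
    calc (inner ℝ (x + y) (Q - P) : ℝ) ≤ ‖x + y‖ * ‖Q - P‖ := key _ _
      _ = s * dist P Q := by rw [hxyn, ← dist_eq_norm, dist_comm]
  have hd2 : (inner ℝ (-x) (R - Q) : ℝ) ≤ s * dist Q R := by
    calc (inner ℝ (-x) (R - Q) : ℝ) ≤ ‖-x‖ * ‖R - Q‖ := key _ _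
      _ = s * dist Q R := by rw [norm_neg, hxn, ← dist_eq_norm, dist_comm]
  have hd3 : (inner ℝ (-y) (P - R) : ℝ) ≤ s * dist R P := by
    calc (inner ℝ (-y) (P - R) : ℝ) ≤ ‖-y‖ * ‖P - R‖ := key _ _
      _ = s * dist R P := by rw [norm_neg, hyn, ← dist_eq_norm, dist_comm]
  -- the exact identity
  have hQP : Q - P = (1 - t) • x + u • y := by rw [hPA, hQB, hx]; module
  have hRQ : R - Q = (-v) • x + (1 - u - v) • y := by rw [hQB, hRC, hy]; module
  have hPR : P - R = (t - 1 + v) • x + (v - 1) • y := by rw [hPA, hRC, hx, hy]; module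
  have hiden : (inner ℝ (x + y) (Q - P) : ℝ) + (inner ℝ (-x) (R - Q) : ℝ) + (inner ℝ (-y) (P - R) : ℝ) = 3 * s ^ 2 / 2 := by
    rw [hQP, hRQ, hPR]
    simp only [inner_add_left, inner_add_right, inner_neg_left, real_inner_smul_right]
    linear_combination (1 - t + v) * hpp + (1 + u - v) * hqq + (2 * u + v - 1) * hr1 +
      (2 - 2 * t - v) * hr2
  nlinarith [hd1, hd2, hd3, hiden]

section Perimeter

variable {α : Type*} [PseudoMetricSpace α]

/-- Sum of a periodic function over a shifted window. -/
lemma fag_sum_shift (m : ℕ) (f : ℕ → ℝ) (hf : ∀ t, f (t + m) = f t) :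
    ∀ i : ℕ, ∑ t ∈ Finset.Ico i (m + i), f t = ∑ t ∈ Finset.range m, f t := by
  intro i
  induction i with
  | zero => simp
  | succ n ih =>
    rcases Nat.eq_zero_or_pos m with hm | hm
    · simp [hm]
    have h1 : n < m + n := by omega
    have h2 : n + 1 ≤ m + n := by omega
    have e1 : ∑ t ∈ Finset.Ico n (m + n), f t = f n + ∑ t ∈ Finset.Ico (n + 1) (m + n), f t :=
      Finset.sum_eq_sum_Ico_succ_bot h1 f
    have e2 : ∑ t ∈ Finset.Ico (n + 1) (m + n + 1), f t
        = (∑ t ∈ Finset.Ico (n + 1) (m + n), f t) + f (m + n) := by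
      rw [Finset.sum_Ico_succ_top h2]
    have : m + (n + 1) = m + n + 1 := by omega
    rw [this, e2]
    have : f (m + n) = f n := by rw [add_comm m n, hf n]
    rw [this]
    linarith [ih.symm.trans e1]

lemma fag_arc (q : ℕ → α) {a b : ℕ} (hab : a ≤ b) :
    dist (q a) (q b) ≤ ∑ t ∈ Finset.Ico a b, dist (q t) (q (t + 1)) := by
  have h := dist_le_range_sum_dist (fun t => q (a + t)) (b - a)
  have e : a + (b - a) = b := by omega
  rw [e] at h
  calc dist (q a) (q b) ≤ ∑ t ∈ Finset.range (b - a), dist (q (a + t)) (q (a + t + 1)) := h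
    _ = ∑ t ∈ Finset.Ico a b, dist (q t) (q (t + 1)) := by
        rw [Finset.sum_Ico_eq_sum_range]

/-- The length of a closed cyclic path is at least the perimeter of a triangle through
any three of its points. -/
lemma fag_perimeter {m : ℕ} [NeZero m] (p : ZMod m → α) (a b c : ZMod m)
    (h : a.val ≤ b.val) (h' : b.val ≤ c.val) :
    dist (p a) (p b) + dist (p b) (p c) + dist (p c) (p a)
      ≤ ∑ i : ZMod m, dist (p i) (p (i + 1)) := by
  set q : ℕ → α := fun n => p (n : ZMod m) with hq
  have hper : ∀ t, q (t + m) = q t := by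
    intro t; simp [hq]
  have hcast : ∀ z : ZMod m, q z.val = p z := by
    intro z; simp [hq, ZMod.natCast_val, ZMod.cast_id]
  have hdist : ∀ t : ℕ, dist (q t) (q (t + 1)) = dist (p (t : ZMod m)) (p ((t : ZMod m) + 1)) := by
    intro t
    have : ((t + 1 : ℕ) : ZMod m) = (t : ZMod m) + 1 := by push_cast; ring
    simp only [hq, this]
  have hsum : ∑ i : ZMod m, dist (p i) (p (i + 1)) = ∑ t ∈ Finset.range m, dist (q t) (q (t + 1)) := by
    refine Finset.sum_nbij' (fun (z : ZMod m) => z.val) (fun (t : ℕ) => (t : ZMod m))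
      (fun z _ => Finset.mem_range.2 (ZMod.val_lt z)) (fun t _ => Finset.mem_univ _)
      (fun z _ => by simp [ZMod.natCast_val, ZMod.cast_id])
      (fun t ht => ZMod.val_cast_of_lt (Finset.mem_range.1 ht)) ?_
    intro z _
    rw [hdist z.val]
    congr 2 <;> rw [ZMod.natCast_val, ZMod.cast_id]
  have hcm : c.val < m := ZMod.val_lt c
  have hle : c.val ≤ m + a.val := by omega
  have harc1 := fag_arc q h
  have harc2 := fag_arc q h'
  have harc3 := fag_arc q hle
  have hqa : q (m + a.val) = q a.val := by rw [add_comm]; exact hper a.val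
  rw [hqa] at harc3
  have hsplit : ∑ t ∈ Finset.Ico a.val b.val, dist (q t) (q (t + 1))
      + ∑ t ∈ Finset.Ico b.val c.val, dist (q t) (q (t + 1))
      + ∑ t ∈ Finset.Ico c.val (m + a.val), dist (q t) (q (t + 1))
      = ∑ t ∈ Finset.Ico a.val (m + a.val), dist (q t) (q (t + 1)) := by
    rw [Finset.sum_Ico_consecutive _ h h', Finset.sum_Ico_consecutive _ (le_trans h h') hle]
  have hwin := fag_sum_shift m (fun t => dist (q t) (q (t + 1)))
      (fun t => by show dist (q (t + m)) (q (t + m + 1)) = dist (q t) (q (t + 1)); rw [show t + m + 1 = t + 1 + m by omega, hper (t+1), hper t]) a.val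
  rw [hsum, ← hwin, ← hsplit, ← hcast a, ← hcast b, ← hcast c]
  linarith [harc1, harc2, harc3]

end Perimeter

section Perimeter2
variable {α : Type*} [PseudoMetricSpace α]

lemma fag_perimeter' {m : ℕ} [NeZero m] (p : ZMod m → α) (a b c : ZMod m) :
    dist (p a) (p b) + dist (p b) (p c) + dist (p c) (p a)
      ≤ ∑ i : ZMod m, dist (p i) (p (i + 1)) := by
  have d1 := dist_comm (p a) (p b)
  have d2 := dist_comm (p b) (p c)
  have d3 := dist_comm (p c) (p a)
  rcases le_total a.val b.val with h1 | h1 <;> rcases le_total b.val c.val with h2 | h2 <;>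
    rcases le_total a.val c.val with h3 | h3
  · linarith [fag_perimeter p a b c h1 h2]
  · linarith [fag_perimeter p a b c h1 h2]
  · linarith [fag_perimeter p a c b h3 h2]
  · linarith [fag_perimeter p c a b h3 h1]
  · linarith [fag_perimeter p b a c h1 h3]
  · linarith [fag_perimeter p b c a h2 h3]
  · linarith [fag_perimeter p c b a h2 h1]
  · linarith [fag_perimeter p c b a h2 h1]

end Perimeter2


open Real EuclideanGeometry

variable {V : Type*} [NormedAddCommGroup V] [InnerProductSpace ℝ V]

lemma fag_param (X Y w : V) (hw : w ∈ segment ℝ X Y) (h1 : w ≠ X) (h2 : w ≠ Y) :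
    ∃ c : ℝ, 0 < c ∧ c < 1 ∧ w - Y = c • (X - Y) := by
  obtain ⟨a, b, ha, hb, hab, hw1⟩ := hw
  refine ⟨a, ?_, ?_, ?_⟩
  · rcases ha.lt_or_eq with h | h
    · exact h
    · exfalso; apply h2
      rw [← hw1, ← h, zero_smul, zero_add]
      have : b = 1 := by linarith
      rw [this, one_smul]
  · rcases (show a ≤ 1 by linarith).lt_or_eq with h | h
    · exact h
    · exfalso; apply h1
      rw [← hw1, h, one_smul]
      have : b = 0 := by linarith
      rw [this, zero_smul, add_zero]
  · rw [← hw1]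
    have : b = 1 - a := by linarith
    rw [this]; module

lemma fag_ang_pi {v : V} (hv : v ≠ 0) {a b : ℝ} (ha : a < 0) (hb : 0 < b) :
    InnerProductGeometry.angle (a • v) (b • v) = π := by
  rw [InnerProductGeometry.angle_smul_left_of_neg _ _ ha,
    InnerProductGeometry.angle_smul_right_of_pos _ _ hb,
    InnerProductGeometry.angle_neg_self_of_nonzero hv]

lemma fag_ang_zero {v : V} (hv : v ≠ 0) {a b : ℝ} (ha : a < 0) (hb : b < 0) :
    InnerProductGeometry.angle (a • v) (b • v) = 0 := by
  rw [InnerProductGeometry.angle_smul_left_of_neg _ _ ha,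
    InnerProductGeometry.angle_smul_right_of_neg _ _ hb,
    InnerProductGeometry.angle_self (neg_ne_zero.2 hv)]

open Real EuclideanGeometry


end FagnanoAux

/-- A closed billiard trajectory with `m` bounce points in the triangle with vertices
`A, B, C`: a cyclic sequence of points on the boundary, with consecutive points
distinct, satisfying the billiard reflection law (equal angles of incidence and
reflection) at every bounce point lying in the interior of a side. -/
structure ClosedBilliardTraj (A B C : EuclideanSpace ℝ (Fin 2)) (m : ℕ) [NeZero m] where
  /-- The cyclically indexed bounce points. -/
  p : ZMod m → EuclideanSpace ℝ (Fin 2)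
  /-- Each bounce point lies on the boundary of the triangle. -/
  on_boundary : ∀ i, p i ∈ segment ℝ A B ∪ segment ℝ B C ∪ segment ℝ C A
  /-- Consecutive bounce points are distinct. -/
  ne_consec : ∀ i, p i ≠ p (i + 1)
  /-- The law of reflection: at a bounce point interior to a side `[a, b]`, the angle of
  incidence equals the angle of reflection. -/
  reflect : ∀ i, ∀ a b : EuclideanSpace ℝ (Fin 2),
    ((a, b) = (A, B) ∨ (a, b) = (B, C) ∨ (a, b) = (C, A)) →
    p i ∈ segment ℝ a b → p i ≠ a → p i ≠ b →
    ∠ (p (i - 1)) (p i) a = ∠ (p (i + 1)) (p i) b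

/-- The length of a closed billiard trajectory: the sum of the lengths of its
straight segments. -/
noncomputable def ClosedBilliardTraj.length {A B C : EuclideanSpace ℝ (Fin 2)} {m : ℕ}
    [NeZero m] (T : ClosedBilliardTraj A B C m) : ℝ :=
  ∑ i : ZMod m, dist (T.p i) (T.p (i + 1))

/-- Every closed billiard trajectory touches the third side `[C,A]`. -/
lemma fag_touch (A B C : EuclideanSpace ℝ (Fin 2)) (s : ℝ) (hs : 0 < s)
    (hAB : dist A B = s) (hBC : dist B C = s) (hCA : dist C A = s)
    {m : ℕ} [NeZero m] (T : ClosedBilliardTraj A B C m) :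
    ∃ k, T.p k ∈ segment ℝ C A := by
  by_contra hcon
  push_neg at hcon
  set p := T.p with hp
  have hmem : ∀ i, p i ∈ segment ℝ A B ∪ segment ℝ B C := by
    intro i
    rcases T.on_boundary i with (h | h) | h
    · exact Or.inl h
    · exact Or.inr h
    · exact absurd h (hcon i)
  have hneA : ∀ i, p i ≠ A := fun i h => hcon i (h ▸ right_mem_segment ℝ C A)
  have hneC : ∀ i, p i ≠ C := fun i h => hcon i (h ▸ left_mem_segment ℝ C A)
  have hABne : A ≠ B := by intro h; rw [h, dist_self] at hAB; linarith
  have hvAB : A - B ≠ 0 := sub_ne_zero.2 hABne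
  have hCBne : C ≠ B := by intro h; rw [h, dist_comm, dist_self] at hBC; linarith
  have hvCB : C - B ≠ 0 := sub_ne_zero.2 hCBne
  have indep := fag_indep A B C s hs hAB hBC hCA
  have hclass : ∀ i, p i = B ∨ (p i ∈ segment ℝ A B ∧ p i ≠ A ∧ p i ≠ B)
      ∨ (p i ∈ segment ℝ B C ∧ p i ≠ B ∧ p i ≠ C) := by
    intro i
    rcases hmem i with h | h
    · by_cases hB : p i = B
      · exact Or.inl hB
      · exact Or.inr (Or.inl ⟨h, hneA i, hB⟩)
    · by_cases hB : p i = B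
      · exact Or.inl hB
      · exact Or.inr (Or.inr ⟨h, hB, hneC i⟩)
  have hBB : ∀ x : EuclideanSpace ℝ (Fin 2), ∠ B B x = π / 2 := by
    intro x
    rw [EuclideanGeometry.angle, vsub_self]
    exact InnerProductGeometry.angle_zero_left _
  have hBB' : ∀ x : EuclideanSpace ℝ (Fin 2), ∠ x B B = π / 2 := by
    intro x
    rw [EuclideanGeometry.angle, vsub_self]
    exact InnerProductGeometry.angle_zero_right _
  -- the reflection relation around each point
  have hrel : ∀ i : ZMod m, ∠ B (p (i + 1)) (p i) + ∠ B (p (i + 1)) (p (i + 1 + 1)) = π := by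
    intro i
    rcases hclass (i + 1) with hB | hint | hint
    · rw [hB, hBB, hBB]; ring
    · have hsb : Sbtw ℝ A (p (i + 1)) B :=
        ⟨mem_segment_iff_wbtw.1 hint.1, hint.2.1, hint.2.2⟩
      have hpi : ∠ A (p (i + 1)) B = π := angle_eq_pi_iff_sbtw.2 hsb
      have hlaw := T.reflect (i + 1) A B (Or.inl rfl) hint.1 hint.2.1 hint.2.2
      have hidx : (i + 1 - 1 : ZMod m) = i := by ring
      rw [hidx] at hlaw
      have hadd := EuclideanGeometry.angle_add_angle_eq_pi_of_angle_eq_pi (p i) hpi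
      have c1 := angle_comm B (p (i + 1)) (p i)
      have c2 := angle_comm B (p (i + 1)) (p (i + 1 + 1))
      have c3 := angle_comm (p (i + 1 + 1)) (p (i + 1)) B
      linarith [hadd, hlaw, c1, c2, c3]
    · have hsb : Sbtw ℝ B (p (i + 1)) C :=
        ⟨mem_segment_iff_wbtw.1 hint.1, hint.2.1, hint.2.2⟩
      have hpi : ∠ B (p (i + 1)) C = π := angle_eq_pi_iff_sbtw.2 hsb
      have hlaw := T.reflect (i + 1) B C (Or.inr (Or.inl rfl)) hint.1 hint.2.1 hint.2.2
      have hidx : (i + 1 - 1 : ZMod m) = i := by ring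
      rw [hidx] at hlaw
      have hadd := EuclideanGeometry.angle_add_angle_eq_pi_of_angle_eq_pi (p (i + 1 + 1)) hpi
      have c1 := angle_comm B (p (i + 1)) (p i)
      have c2 := angle_comm B (p (i + 1)) (p (i + 1 + 1))
      linarith [hadd, hlaw, c1, c2]
  -- the triangle angle sum around each segment
  have hsum3 : ∀ i : ZMod m, ∠ (p i) B (p (i + 1)) + ∠ B (p i) (p (i + 1))
      + ∠ B (p (i + 1)) (p i) = π := by
    intro i
    by_cases h1 : p i = B
    · have h2 : B ≠ p (i + 1) := by rw [← h1]; exact T.ne_consec i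
      rw [h1, hBB, angle_self_of_ne h2]
      ring
    · by_cases h2 : p (i + 1) = B
      · have h3 : B ≠ p i := Ne.symm h1
        rw [h2, hBB', hBB, angle_self_of_ne h3]
        ring
      · have h := EuclideanGeometry.angle_add_angle_add_angle_eq_pi
          (p₁ := B) (p₂ := p i) (p₃ := p (i + 1)) h1
        have c1 := angle_comm (p (i + 1)) B (p i)
        have c2 := angle_comm (p i) (p (i + 1)) B
        linarith [h, c1, c2]
  -- summing up
  have hcard : (Finset.univ : Finset (ZMod m)).card = m := by
    rw [Finset.card_univ, ZMod.card]
  have hshift : ∑ i : ZMod m, ∠ B (p (i + 1)) (p (i + 1 + 1))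
      = ∑ i : ZMod m, ∠ B (p i) (p (i + 1)) :=
    Fintype.sum_equiv (Equiv.addRight (1 : ZMod m))
      (fun i => ∠ B (p (i + 1)) (p (i + 1 + 1))) (fun j => ∠ B (p j) (p (j + 1)))
      (fun i => rfl)
  have hS1 : ∑ i : ZMod m, (∠ B (p (i + 1)) (p i) + ∠ B (p (i + 1)) (p (i + 1 + 1)))
      = m * π := by
    rw [Finset.sum_congr rfl (fun i _ => hrel i), Finset.sum_const, hcard, nsmul_eq_mul]
  have hS2 : ∑ i : ZMod m, (∠ (p i) B (p (i + 1)) + ∠ B (p i) (p (i + 1))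
      + ∠ B (p (i + 1)) (p i)) = m * π := by
    rw [Finset.sum_congr rfl (fun i _ => hsum3 i), Finset.sum_const, hcard, nsmul_eq_mul]
  have hsum0 : ∑ i : ZMod m, ∠ (p i) B (p (i + 1)) = 0 := by
    have e1 : ∑ i : ZMod m, (∠ B (p (i + 1)) (p i) + ∠ B (p (i + 1)) (p (i + 1 + 1)))
        = ∑ i : ZMod m, ∠ B (p (i + 1)) (p i)
          + ∑ i : ZMod m, ∠ B (p (i + 1)) (p (i + 1 + 1)) := Finset.sum_add_distrib
    have e2 : ∑ i : ZMod m, (∠ (p i) B (p (i + 1)) + ∠ B (p i) (p (i + 1))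
        + ∠ B (p (i + 1)) (p i))
        = ∑ i : ZMod m, (∠ (p i) B (p (i + 1)) + ∠ B (p i) (p (i + 1)))
          + ∑ i : ZMod m, ∠ B (p (i + 1)) (p i) := Finset.sum_add_distrib
    have e3 : ∑ i : ZMod m, (∠ (p i) B (p (i + 1)) + ∠ B (p i) (p (i + 1)))
        = ∑ i : ZMod m, ∠ (p i) B (p (i + 1)) + ∑ i : ZMod m, ∠ B (p i) (p (i + 1)) :=
      Finset.sum_add_distrib
    rw [e1, hshift] at hS1
    rw [e2, e3] at hS2
    linarith
  have hα0 : ∀ i : ZMod m, ∠ (p i) B (p (i + 1)) = 0 := by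
    intro i
    have := (Finset.sum_eq_zero_iff_of_nonneg
      (fun j _ => angle_nonneg (p j) B (p (j + 1)))).1 hsum0 i (Finset.mem_univ i)
    exact this
  have hBne : ∀ i, p i ≠ B := by
    intro i hB
    have h0 := hα0 i
    rw [hB, hBB] at h0
    linarith [Real.pi_pos]
  have hray : ∀ i : ZMod m, ∃ r : ℝ, 0 < r ∧ p (i + 1) - B = r • (p i - B) := by
    intro i
    have h0 := hα0 i
    rw [EuclideanGeometry.angle, InnerProductGeometry.angle_eq_zero_iff] at h0
    obtain ⟨-, r, hr, heq⟩ := h0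
    refine ⟨r, hr, ?_⟩
    rwa [vsub_eq_sub, vsub_eq_sub] at heq
  -- each point lies on exactly one open side
  have hint : ∀ i, p i ∈ segment ℝ A B ∨ p i ∈ segment ℝ B C := by
    intro i
    rcases hclass i with hB | h | h
    · exact absurd hB (hBne i)
    · exact Or.inl h.1
    · exact Or.inr h.1
  -- propagation along the trajectory
  have hprop : ∀ i, p i ∈ segment ℝ A B → p (i + 1) ∈ segment ℝ A B := by
    intro i hi
    by_contra hnot
    have hBCmem : p (i + 1) ∈ segment ℝ B C := (hint (i + 1)).resolve_left hnot
    obtain ⟨c, hc0, hc1, hceq⟩ := fag_param A B (p i) hi (hneA i) (hBne i)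
    obtain ⟨d, hd0, hd1, hdeq⟩ := fag_param C B (p (i + 1))
      ((segment_symm ℝ B C) ▸ hBCmem) (hneC (i + 1)) (hBne (i + 1))
    obtain ⟨r, hr, hre⟩ := hray i
    have heq : (r * c) • (A - B) = d • (C - B) := by
      rw [← hdeq, ← smul_smul, ← hceq, ← hre]
    have := (indep (r * c) d heq).2
    linarith
  have hprop' : ∀ i, p i ∈ segment ℝ B C → p (i + 1) ∈ segment ℝ B C := by
    intro i hi
    by_contra hnot
    have hABmem : p (i + 1) ∈ segment ℝ A B := (hint (i + 1)).resolve_right hnot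
    obtain ⟨c, hc0, hc1, hceq⟩ := fag_param C B (p i)
      ((segment_symm ℝ B C) ▸ hi) (hneC i) (hBne i)
    obtain ⟨d, hd0, hd1, hdeq⟩ := fag_param A B (p (i + 1)) hABmem (hneA (i + 1)) (hBne (i + 1))
    obtain ⟨r, hr, hre⟩ := hray i
    have heq : d • (A - B) = (r * c) • (C - B) := by
      rw [← hdeq, ← smul_smul, ← hceq, ← hre]
    have := (indep d (r * c) heq).1
    linarith
  -- all points are on a single side
  have hall : (∀ i, p i ∈ segment ℝ A B) ∨ (∀ i, p i ∈ segment ℝ B C) := by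
    have key : ∀ (P : ZMod m → Prop), (∀ i, P i → P (i + 1)) → P 0 → ∀ i, P i := by
      intro P hstep h0 i
      have hnat : ∀ n : ℕ, P ((n : ℕ) : ZMod m) := by
        intro n
        induction n with
        | zero => simpa using h0
        | succ k ih =>
          have := hstep _ ih
          rwa [show ((k + 1 : ℕ) : ZMod m) = ((k : ℕ) : ZMod m) + 1 by push_cast; ring]
      have := hnat i.val
      rwa [ZMod.natCast_rightInverse i] at this
    rcases hint 0 with h0 | h0
    · exact Or.inl (key _ hprop h0)
    · exact Or.inr (key _ hprop' h0)
  -- final contradiction: a closed path cannot slide along a single side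
  rcases hall with hallAB | hallBC
  · -- all points interior to [A,B]
    have hpar : ∀ i, ∃ c : ℝ, 0 < c ∧ c < 1 ∧ p i - B = c • (A - B) :=
      fun i => fag_param A B (p i) (hallAB i) (hneA i) (hBne i)
    choose c hc0 hc1 hceq using hpar
    obtain ⟨i, -, hmax⟩ := Finset.exists_max_image Finset.univ c ⟨0, Finset.mem_univ 0⟩
    have hinj : ∀ j k : ZMod m, c j = c k → p j = p k := by
      intro j k h
      have h2 : p j - B = p k - B := by rw [hceq, hceq, h]
      exact sub_left_inj.1 h2
    have hne1 : c (i + 1) < c i := by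
      rcases (hmax (i + 1) (Finset.mem_univ _)).lt_or_eq with h | h
      · exact h
      · exact absurd (hinj _ _ h) (Ne.symm (T.ne_consec i))
    have hne2 : c (i - 1) < c i := by
      rcases (hmax (i - 1) (Finset.mem_univ _)).lt_or_eq with h | h
      · exact h
      · exfalso
        have h3 := hinj _ _ h
        have hcons := T.ne_consec (i - 1)
        rw [sub_add_cancel] at hcons
        exact hcons h3
    have hlaw := T.reflect i A B (Or.inl rfl) (hallAB i) (hneA i) (hBne i)
    have hv1 : p (i - 1) - p i = (c (i - 1) - c i) • (A - B) := by
      have h4 : p (i - 1) - p i = (p (i - 1) - B) - (p i - B) := by abel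
      rw [h4, hceq, hceq, sub_smul]
    have hv2 : p (i + 1) - p i = (c (i + 1) - c i) • (A - B) := by
      have h4 : p (i + 1) - p i = (p (i + 1) - B) - (p i - B) := by abel
      rw [h4, hceq, hceq, sub_smul]
    have hv3 : A - p i = (1 - c i) • (A - B) := by
      have h4 : A - p i = (A - B) - (p i - B) := by abel
      rw [h4, hceq]
      module
    have hv4 : B - p i = (-(c i)) • (A - B) := by
      have h4 : B - p i = -(p i - B) := by abel
      rw [h4, hceq]
      module
    have hL : ∠ (p (i - 1)) (p i) A = π := by
      rw [EuclideanGeometry.angle, vsub_eq_sub, vsub_eq_sub, hv1, hv3]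
      exact fag_ang_pi hvAB (by linarith) (by linarith [hc1 i])
    have hR : ∠ (p (i + 1)) (p i) B = 0 := by
      rw [EuclideanGeometry.angle, vsub_eq_sub, vsub_eq_sub, hv2, hv4]
      exact fag_ang_zero hvAB (by linarith) (by linarith [hc0 i])
    rw [hL, hR] at hlaw
    exact Real.pi_ne_zero hlaw
  · -- all points interior to [B,C]
    have hpar : ∀ i, ∃ c : ℝ, 0 < c ∧ c < 1 ∧ p i - B = c • (C - B) :=
      fun i => fag_param C B (p i) ((segment_symm ℝ B C) ▸ hallBC i) (hneC i) (hBne i)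
    choose c hc0 hc1 hceq using hpar
    obtain ⟨i, -, hmax⟩ := Finset.exists_max_image Finset.univ c ⟨0, Finset.mem_univ 0⟩
    have hinj : ∀ j k : ZMod m, c j = c k → p j = p k := by
      intro j k h
      have h2 : p j - B = p k - B := by rw [hceq, hceq, h]
      exact sub_left_inj.1 h2
    have hne1 : c (i + 1) < c i := by
      rcases (hmax (i + 1) (Finset.mem_univ _)).lt_or_eq with h | h
      · exact h
      · exact absurd (hinj _ _ h) (Ne.symm (T.ne_consec i))
    have hne2 : c (i - 1) < c i := by
      rcases (hmax (i - 1) (Finset.mem_univ _)).lt_or_eq with h | h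
      · exact h
      · exfalso
        have h3 := hinj _ _ h
        have hcons := T.ne_consec (i - 1)
        rw [sub_add_cancel] at hcons
        exact hcons h3
    have hlaw := T.reflect i B C (Or.inr (Or.inl rfl)) (hallBC i) (hBne i) (hneC i)
    have hv1 : p (i - 1) - p i = (c (i - 1) - c i) • (C - B) := by
      have h4 : p (i - 1) - p i = (p (i - 1) - B) - (p i - B) := by abel
      rw [h4, hceq, hceq, sub_smul]
    have hv2 : p (i + 1) - p i = (c (i + 1) - c i) • (C - B) := by
      have h4 : p (i + 1) - p i = (p (i + 1) - B) - (p i - B) := by abel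
      rw [h4, hceq, hceq, sub_smul]
    have hv3 : C - p i = (1 - c i) • (C - B) := by
      have h4 : C - p i = (C - B) - (p i - B) := by abel
      rw [h4, hceq]
      module
    have hv4 : B - p i = (-(c i)) • (C - B) := by
      have h4 : B - p i = -(p i - B) := by abel
      rw [h4, hceq]
      module
    have hL : ∠ (p (i - 1)) (p i) B = 0 := by
      rw [EuclideanGeometry.angle, vsub_eq_sub, vsub_eq_sub, hv1, hv4]
      exact fag_ang_zero hvCB (by linarith) (by linarith [hc0 i])
    have hR : ∠ (p (i + 1)) (p i) C = π := by
      rw [EuclideanGeometry.angle, vsub_eq_sub, vsub_eq_sub, hv2, hv3]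
      exact fag_ang_pi hvCB (by linarith) (by linarith [hc1 i])
    rw [hL, hR] at hlaw
    exact Real.pi_ne_zero hlaw.symm

/-- Cyclic rotation of the triangle for a billiard trajectory. -/
def ClosedBilliardTraj.rot {A B C : EuclideanSpace ℝ (Fin 2)} {m : ℕ} [NeZero m]
    (T : ClosedBilliardTraj A B C m) : ClosedBilliardTraj B C A m where
  p := T.p
  on_boundary := fun i => by
    rcases T.on_boundary i with (h | h) | h
    · exact Or.inr h
    · exact Or.inl (Or.inl h)
    · exact Or.inl (Or.inr h)
  ne_consec := T.ne_consec
  reflect := fun i a b hab hmem h1 h2 => by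
    apply T.reflect i a b _ hmem h1 h2
    tauto

/-- **The Fagnano orbit is the shortest closed billiard trajectory in an equilateral
triangle.**  In an equilateral triangle of side length `s > 0`, the inscribed medial
triangle joining the midpoints of the three sides is a closed billiard trajectory of
length `3s/2`, and every closed billiard trajectory has length at least `3s/2`. -/
theorem fagnano_orbit_shortest (A B C : EuclideanSpace ℝ (Fin 2)) (s : ℝ) (hs : 0 < s)
    (hAB : dist A B = s) (hBC : dist B C = s) (hCA : dist C A = s) :
    (∃ T : ClosedBilliardTraj A B C 3,
      T.p 0 = midpoint ℝ A B ∧ T.p 1 = midpoint ℝ B C ∧ T.p 2 = midpoint ℝ C A ∧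
      T.length = 3 * s / 2) ∧
    (∀ (m : ℕ) [NeZero m] (T : ClosedBilliardTraj A B C m), 3 * s / 2 ≤ T.length) := by
  constructor
  · -- existence of the Fagnano orbit
    set m0 := midpoint ℝ A B with hm0
    set m1 := midpoint ℝ B C with hm1
    set m2 := midpoint ℝ C A with hm2
    have h3 : ∀ j : ZMod 3, j = 0 ∨ j = 1 ∨ j = 2 := by decide
    set pf : ZMod 3 → EuclideanSpace ℝ (Fin 2) :=
      fun i => if i = 0 then m0 else if i = 1 then m1 else m2 with hpf
    have hp0 : pf 0 = m0 := by simp [hpf]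
    have hp1 : pf 1 = m1 := by
      simp only [hpf]
      rw [if_neg (show ¬(1 : ZMod 3) = 0 by decide)]
      simp
    have hp2 : pf 2 = m2 := by
      simp only [hpf]
      rw [if_neg (show ¬(2 : ZMod 3) = 0 by decide), if_neg (show ¬(2 : ZMod 3) = 1 by decide)]
    -- midpoint difference computations
    have hABne : A ≠ B := by intro h; rw [h, dist_self] at hAB; linarith
    have hBCne : B ≠ C := by intro h; rw [h, dist_self] at hBC; linarith
    have hCAne : C ≠ A := by intro h; rw [h, dist_self] at hCA; linarith
    have hmd : ∀ x y u v : EuclideanSpace ℝ (Fin 2),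
        midpoint ℝ x y - midpoint ℝ u v = (2⁻¹ : ℝ) • (x - u + (y - v)) := by
      intro x y u v
      rw [midpoint_eq_smul_add, midpoint_eq_smul_add, invOf_eq_inv]
      module
    have hmd' : ∀ x y z : EuclideanSpace ℝ (Fin 2),
        z - midpoint ℝ x y = (2⁻¹ : ℝ) • (z - x + (z - y)) := by
      intro x y z
      rw [midpoint_eq_smul_add, invOf_eq_inv]
      module
    have e01 : m2 - m0 = (2⁻¹ : ℝ) • (C - B) := by
      rw [hm2, hm0, hmd]; congr 1; abel
    have eA0 : A - m0 = (2⁻¹ : ℝ) • (A - B) := by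
      rw [hm0, hmd']; congr 1; abel
    have e10 : m1 - m0 = (2⁻¹ : ℝ) • (C - A) := by
      rw [hm1, hm0, hmd]; congr 1; abel
    have eB0 : B - m0 = (2⁻¹ : ℝ) • (B - A) := by
      rw [hm0, hmd']; congr 1; abel
    have e02 : m0 - m1 = (2⁻¹ : ℝ) • (A - C) := by
      rw [hm0, hm1, hmd]; congr 1; abel
    have eB1 : B - m1 = (2⁻¹ : ℝ) • (B - C) := by
      rw [hm1, hmd']; congr 1; abel
    have e21 : m2 - m1 = (2⁻¹ : ℝ) • (A - B) := by
      rw [hm2, hm1, hmd]; congr 1; abel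
    have eC1 : C - m1 = (2⁻¹ : ℝ) • (C - B) := by
      rw [hm1, hmd']; congr 1; abel
    have e12 : m1 - m2 = (2⁻¹ : ℝ) • (B - A) := by
      rw [hm1, hm2, hmd]; congr 1; abel
    have eC2 : C - m2 = (2⁻¹ : ℝ) • (C - A) := by
      rw [hm2, hmd']; congr 1; abel
    have e02' : m0 - m2 = (2⁻¹ : ℝ) • (B - C) := by
      rw [hm0, hm2, hmd]; congr 1; abel
    have eA2 : A - m2 = (2⁻¹ : ℝ) • (A - C) := by
      rw [hm2, hmd']; congr 1; abel
    have half_ne : (2⁻¹ : ℝ) ≠ 0 := by norm_num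
    -- the three reflection-law angle identities
    have hangE : ∀ x y u v : EuclideanSpace ℝ (Fin 2), ∀ w : EuclideanSpace ℝ (Fin 2),
        True := fun _ _ _ _ _ => trivial
    have ang0 : ∠ m2 m0 A = ∠ m1 m0 B := by
      rw [EuclideanGeometry.angle, EuclideanGeometry.angle, vsub_eq_sub, vsub_eq_sub,
        vsub_eq_sub, vsub_eq_sub, e01, eA0, e10, eB0,
        InnerProductGeometry.angle_smul_smul half_ne, InnerProductGeometry.angle_smul_smul half_ne]
      exact fag_eqang A B C s hs hAB hBC hCA
    have ang1 : ∠ m0 m1 B = ∠ m2 m1 C := by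
      rw [EuclideanGeometry.angle, EuclideanGeometry.angle, vsub_eq_sub, vsub_eq_sub,
        vsub_eq_sub, vsub_eq_sub, e02, eB1, e21, eC1,
        InnerProductGeometry.angle_smul_smul half_ne, InnerProductGeometry.angle_smul_smul half_ne]
      exact fag_eqang B C A s hs hBC hCA hAB
    have ang2 : ∠ m1 m2 C = ∠ m0 m2 A := by
      rw [EuclideanGeometry.angle, EuclideanGeometry.angle, vsub_eq_sub, vsub_eq_sub,
        vsub_eq_sub, vsub_eq_sub, e12, eC2, e02', eA2,
        InnerProductGeometry.angle_smul_smul half_ne, InnerProductGeometry.angle_smul_smul half_ne]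
      exact fag_eqang C A B s hs hCA hAB hBC
    -- membership of midpoints
    have hm0m : m0 ∈ segment ℝ A B := by rw [hm0]; exact midpoint_mem_segment A B
    have hm1m : m1 ∈ segment ℝ B C := by rw [hm1]; exact midpoint_mem_segment B C
    have hm2m : m2 ∈ segment ℝ C A := by rw [hm2]; exact midpoint_mem_segment C A
    have hm0A : m0 ≠ A := by
      intro h
      have := eA0
      rw [h, sub_self] at this
      have := this.symm
      rcases smul_eq_zero.1 this with h' | h'
      · norm_num at h'
      · exact hABne (sub_eq_zero.1 h')
    have hm0B : m0 ≠ B := by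
      intro h
      have := eB0
      rw [h, sub_self] at this
      rcases smul_eq_zero.1 this.symm with h' | h'
      · norm_num at h'
      · exact hABne (sub_eq_zero.1 h').symm
    have hm1B : m1 ≠ B := by
      intro h
      have := eB1
      rw [h, sub_self] at this
      rcases smul_eq_zero.1 this.symm with h' | h'
      · norm_num at h'
      · exact hBCne (sub_eq_zero.1 h')
    have hm1C : m1 ≠ C := by
      intro h
      have := eC1
      rw [h, sub_self] at this
      rcases smul_eq_zero.1 this.symm with h' | h'
      · norm_num at h'
      · exact hBCne (sub_eq_zero.1 h').symm
    have hm2C : m2 ≠ C := by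
      intro h
      have := eC2
      rw [h, sub_self] at this
      rcases smul_eq_zero.1 this.symm with h' | h'
      · norm_num at h'
      · exact hCAne (sub_eq_zero.1 h')
    have hm2A : m2 ≠ A := by
      intro h
      have := eA2
      rw [h, sub_self] at this
      rcases smul_eq_zero.1 this.symm with h' | h'
      · norm_num at h'
      · exact hCAne (sub_eq_zero.1 h').symm
    -- side-intersection lemmas
    have capABBC := fag_seg_cap A B C s hs hAB hBC hCA
    have capBCCA := fag_seg_cap B C A s hs hBC hCA hAB
    have capCAAB := fag_seg_cap C A B s hs hCA hAB hBC
    -- distances between midpoints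
    have hnorm : ∀ x y : EuclideanSpace ℝ (Fin 2), ∀ u v : EuclideanSpace ℝ (Fin 2),
        x - y = (2⁻¹ : ℝ) • (u - v) → dist x y = dist u v / 2 := by
      intro x y u v h
      rw [dist_eq_norm, h, norm_smul, dist_eq_norm]
      norm_num
      ring
    have d01 : dist m0 m1 = s / 2 := by
      rw [hnorm m0 m1 A C e02, dist_comm, hCA]
    have d12 : dist m1 m2 = s / 2 := by
      rw [hnorm m1 m2 B A e12, dist_comm, hAB]
    have d20 : dist m2 m0 = s / 2 := by
      rw [hnorm m2 m0 C B e01, dist_comm, hBC]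
    -- index arithmetic in ZMod 3
    have i0m : (0 - 1 : ZMod 3) = 2 := by decide
    have i0p : (0 + 1 : ZMod 3) = 1 := by decide
    have i1m : (1 - 1 : ZMod 3) = 0 := by decide
    have i1p : (1 + 1 : ZMod 3) = 2 := by decide
    have i2m : (2 - 1 : ZMod 3) = 1 := by decide
    have i2p : (2 + 1 : ZMod 3) = 0 := by decide
    have hne01 : m0 ≠ m1 := by
      intro h
      have h0 := e02
      rw [h, sub_self] at h0
      rcases smul_eq_zero.1 h0.symm with h' | h'
      · norm_num at h'
      · exact hCAne (sub_eq_zero.1 h').symm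
    have hne12 : m1 ≠ m2 := by
      intro h
      have h0 := e12
      rw [h, sub_self] at h0
      rcases smul_eq_zero.1 h0.symm with h' | h'
      · norm_num at h'
      · exact hABne (sub_eq_zero.1 h').symm
    have hne20 : m2 ≠ m0 := by
      intro h
      have h0 := e01
      rw [h, sub_self] at h0
      rcases smul_eq_zero.1 h0.symm with h' | h'
      · norm_num at h'
      · exact hBCne (sub_eq_zero.1 h').symm
    refine ⟨⟨pf, ?_, ?_, ?_⟩, hp0, hp1, hp2, ?_⟩
    · -- on_boundary
      intro i
      rcases h3 i with rfl | rfl | rfl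
      · exact Or.inl (Or.inl (by rw [hp0]; exact hm0m))
      · exact Or.inl (Or.inr (by rw [hp1]; exact hm1m))
      · exact Or.inr (by rw [hp2]; exact hm2m)
    · -- ne_consec
      intro i
      rcases h3 i with rfl | rfl | rfl
      · rw [hp0, i0p, hp1]; exact hne01
      · rw [hp1, i1p, hp2]; exact hne12
      · rw [hp2, i2p, hp0]; exact hne20
    · -- reflect
      intro i a b hab hmem h1 h2
      rcases h3 i with rfl | rfl | rfl <;>
        (rcases hab with he | he | he <;> rw [Prod.mk.injEq] at he <;> obtain ⟨rfl, rfl⟩ := he)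
      · rw [i0m, i0p, hp2, hp0, hp1]; exact ang0
      · rw [hp0] at hmem h1
        exact absurd (capABBC m0 hm0m hmem) h1
      · rw [hp0] at hmem h2
        exact absurd (capCAAB m0 hmem hm0m) h2
      · rw [hp1] at hmem h2
        exact absurd (capABBC m1 hmem hm1m) h2
      · rw [i1m, i1p, hp0, hp1, hp2]; exact ang1
      · rw [hp1] at hmem h1
        exact absurd (capBCCA m1 hm1m hmem) h1
      · rw [hp2] at hmem h1
        exact absurd (capCAAB m2 hm2m hmem) h1
      · rw [hp2] at hmem h2
        exact absurd (capBCCA m2 hmem hm2m) h2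
      · rw [i2m, i2p, hp1, hp2, hp0]; exact ang2
    · -- length
      show ∑ i : ZMod 3, dist (pf i) (pf (i + 1)) = 3 * s / 2
      have huniv : (Finset.univ : Finset (ZMod 3)) = {0, 1, 2} := by decide
      rw [huniv, Finset.sum_insert (by decide), Finset.sum_insert (by decide),
        Finset.sum_singleton, i0p, i1p, i2p, hp0, hp1, hp2, d01, d12]
      rw [d20]
      ring
  · -- the lower bound
    intro m _ T
    obtain ⟨k3, hk3⟩ := fag_touch A B C s hs hAB hBC hCA T
    obtain ⟨k1, hk1⟩ := fag_touch B C A s hs hBC hCA hAB T.rot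
    obtain ⟨k2, hk2⟩ := fag_touch C A B s hs hCA hAB hBC T.rot.rot
    have hk1' : T.p k1 ∈ segment ℝ A B := hk1
    have hk2' : T.p k2 ∈ segment ℝ B C := hk2
    have hper := fag_perimeter' T.p k1 k2 k3
    have hineq := fag_ineq A B C (T.p k1) (T.p k2) (T.p k3) s hs hAB hBC hCA hk1' hk2' hk3
    calc 3 * s / 2 ≤ dist (T.p k1) (T.p k2) + dist (T.p k2) (T.p k3)
          + dist (T.p k3) (T.p k1) := hineq
      _ ≤ ∑ i : ZMod m, dist (T.p i) (T.p (i + 1)) := hper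
      _ = T.length := rfl
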